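/- Let F : X → X be a piecewise contraction of a compact metric space with base partition P, and let C(t) = #P^t be its complexity (with P^1 = P and P^{t+1} = {F^{-1}(I) ∩ J : I ∈ P^t, J ∈ P}). Then the topological entropy satisfies h_top(X,F) ≤ limsup_{t→∞} (1/t) log C(t). -/
import Mathlib


open Filter

/-- Dynamical partitions: `dynPartition F P t` is the paper's `P^{t+1}`
(so `dynPartition F P 0 = P = P^1`). -/
def dynPartition {X : Type*} (F : X → X) (P : Set (Set X)) : ℕ → Set (Set X)
  | 0 => P
  | (t + 1) => {S | ∃ I ∈ dynPartition F P t, ∃ J ∈ P,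
      S = F ⁻¹' I ∩ J ∧ S ≠ ∅}

/-- `E` is `(τ,ε)`-separated: any two distinct points of `E` are `ε`-apart at some
time `0 ≤ t ≤ τ`. -/
def IsSeparated {X : Type*} [MetricSpace X] (F : X → X) (τ : ℕ) (ε : ℝ)
    (E : Set X) : Prop :=
  ∀ x ∈ E, ∀ y ∈ E, x ≠ y → ∃ t ≤ τ, ε ≤ dist (F^[t] x) (F^[t] y)

/-- `N(τ,ε)`: maximal cardinality of a `(τ,ε)`-separated set. -/
noncomputable def sepNum {X : Type*} [MetricSpace X] (F : X → X) (τ : ℕ) (ε : ℝ) : ℕ :=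
  sSup {n : ℕ | ∃ E : Finset X, IsSeparated F τ ε ↑E ∧ E.card = n}

/-- Topological entropy `h_top = lim_{ε→0} limsup_τ log N(τ,ε)/τ`, written as the
supremum over `ε > 0` (the limsups are monotone in `ε`). -/
noncomputable def htop {X : Type*} [MetricSpace X] (F : X → X) : EReal :=
  ⨆ (ε : ℝ) (_ : 0 < ε),
    Filter.limsup (fun τ : ℕ => ((Real.log (sepNum F τ ε) / τ : ℝ) : EReal)) atTop

/-! ### Auxiliary lemmas -/

lemma dynPartition_finite {X : Type*} (F : X → X) {P : Set (Set X)} (hP : P.Finite) :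
    ∀ t, (dynPartition F P t).Finite := by
  intro t
  induction t with
  | zero => exact hP
  | succ t ih =>
    apply Set.Finite.subset
      (Set.Finite.image (fun p : Set X × Set X => F ⁻¹' p.1 ∩ p.2) (ih.prod hP))
    rintro S ⟨I, hI, J, hJ, rfl, -⟩
    exact ⟨(I, J), ⟨hI, hJ⟩, rfl⟩

lemma dynPartition_cover {X : Type*} (F : X → X) {P : Set (Set X)}
    (hcover : ⋃₀ P = Set.univ) : ∀ t, ⋃₀ dynPartition F P t = Set.univ := by
  intro t
  induction t with
  | zero => exact hcover
  | succ t ih =>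
    apply Set.eq_univ_of_forall
    intro x
    have hx : F x ∈ ⋃₀ dynPartition F P t := by rw [ih]; trivial
    obtain ⟨I, hI, hxI⟩ := hx
    have hxP : x ∈ ⋃₀ P := by rw [hcover]; trivial
    obtain ⟨J, hJ, hxJ⟩ := hxP
    refine ⟨F ⁻¹' I ∩ J, ⟨I, hI, J, hJ, rfl, ?_⟩, hxI, hxJ⟩
    intro h
    rw [Set.eq_empty_iff_forall_notMem] at h
    exact h x ⟨hxI, hxJ⟩

lemma dynPartition_together {X : Type*} (F : X → X) {P : Set (Set X)} :
    ∀ t, ∀ S ∈ dynPartition F P t, ∀ x ∈ S, ∀ y ∈ S, ∀ n ≤ t,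
      ∃ J ∈ P, F^[n] x ∈ J ∧ F^[n] y ∈ J := by
  intro t
  induction t with
  | zero =>
    intro S hS x hx y hy n hn
    obtain rfl : n = 0 := Nat.le_zero.mp hn
    exact ⟨S, hS, hx, hy⟩
  | succ t ih =>
    rintro S ⟨I, hI, J, hJ, rfl, -⟩ x hx y hy n hn
    match n with
    | 0 => exact ⟨J, hJ, hx.2, hy.2⟩
    | (m + 1) =>
      have := ih I hI (F x) hx.1 (F y) hy.1 m (Nat.succ_le_succ_iff.mp hn)
      simpa [Function.iterate_succ_apply] using this

lemma dynPartition_contr {X : Type*} [MetricSpace X] {F : X → X} {a : ℝ}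
    (ha0 : 0 ≤ a) (ha1 : a < 1) {P : Set (Set X)}
    (hcontr : ∀ A ∈ P, ∀ x ∈ A, ∀ y ∈ A, dist (F x) (F y) ≤ a * dist x y)
    {t : ℕ} {S : Set X} (hS : S ∈ dynPartition F P t) {x y : X}
    (hx : x ∈ S) (hy : y ∈ S) :
    ∀ n ≤ t + 1, dist (F^[n] x) (F^[n] y) ≤ dist x y := by
  intro n hn
  induction n with
  | zero => simp
  | succ m ih =>
    have hm : m ≤ t := Nat.succ_le_succ_iff.mp hn
    obtain ⟨J, hJ, h1, h2⟩ := dynPartition_together F t S hS x hx y hy m hm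
    calc dist (F^[m+1] x) (F^[m+1] y) = dist (F (F^[m] x)) (F (F^[m] y)) := by
          rw [Function.iterate_succ_apply', Function.iterate_succ_apply']
      _ ≤ a * dist (F^[m] x) (F^[m] y) := hcontr J hJ _ h1 _ h2
      _ ≤ 1 * dist (F^[m] x) (F^[m] y) :=
          mul_le_mul_of_nonneg_right ha1.le dist_nonneg
      _ = dist (F^[m] x) (F^[m] y) := one_mul _
      _ ≤ dist x y := ih (le_trans (Nat.le_succ m) hn)

/-- In a compact metric space, `ε`-separated finsets have bounded cardinality. -/
lemma exists_sep_bound {X : Type*} [MetricSpace X] [CompactSpace X] {ε : ℝ}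
    (hε : 0 < ε) :
    ∃ M : ℕ, 1 ≤ M ∧ ∀ E : Finset X,
      (∀ x ∈ E, ∀ y ∈ E, x ≠ y → ε ≤ dist x y) → E.card ≤ M := by
  classical
  have htb : TotallyBounded (Set.univ : Set X) := isCompact_univ.totallyBounded
  obtain ⟨t, htfin, hcov⟩ := Metric.totallyBounded_iff.mp htb (ε / 2) (by positivity)
  refine ⟨htfin.toFinset.card + 1, by omega, fun E hE => ?_⟩
  have hec : E.card ≤ htfin.toFinset.card := by
    have hex : ∀ x : X, ∃ y ∈ t, x ∈ Metric.ball y (ε / 2) := by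
      intro x
      have := hcov (Set.mem_univ x)
      simpa using this
    set f : X → X := fun x => (hex x).choose with hf
    have hf1 : ∀ x : X, f x ∈ t ∧ x ∈ Metric.ball (f x) (ε / 2) := fun x =>
      ⟨(hex x).choose_spec.1, (hex x).choose_spec.2⟩
    apply Finset.card_le_card_of_injOn f
    · intro x _
      simpa using (hf1 x).1
    · intro x1 hx1 x2 hx2 hfeq
      by_contra hne
      have h1 : dist x1 (f x1) < ε / 2 := Metric.mem_ball.mp (hf1 x1).2
      have h2 : dist x2 (f x2) < ε / 2 := Metric.mem_ball.mp (hf1 x2).2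
      have : dist x1 x2 < ε := by
        calc dist x1 x2 ≤ dist x1 (f x1) + dist (f x2) x2 := by
              rw [hfeq]; exact dist_triangle _ _ _
          _ < ε / 2 + ε / 2 := by rw [dist_comm (f x2) x2]; linarith
          _ = ε := by ring
      exact absurd (hE x1 hx1 x2 hx2 hne) (by linarith)
  omega

lemma sepNum_le_bound {X : Type*} [MetricSpace X] {F : X → X} {a : ℝ}
    (ha0 : 0 ≤ a) (ha1 : a < 1) {P : Set (Set X)} (hPfin : P.Finite)
    (hcover : ⋃₀ P = Set.univ)
    (hcontr : ∀ A ∈ P, ∀ x ∈ A, ∀ y ∈ A, dist (F x) (F y) ≤ a * dist x y)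
    {ε : ℝ} {M : ℕ}
    (hM : ∀ E : Finset X, (∀ x ∈ E, ∀ y ∈ E, x ≠ y → ε ≤ dist x y) → E.card ≤ M)
    (τ : ℕ) :
    sepNum F τ ε ≤ (dynPartition F P (τ - 1)).ncard * M := by
  classical
  refine csSup_le ⟨0, ⟨∅, by simp [IsSeparated], by simp⟩⟩ ?_
  rintro n ⟨E, hE, rfl⟩
  set D : Finset (Set X) := (dynPartition_finite F hPfin (τ - 1)).toFinset with hD
  have hsub : E ⊆ D.biUnion (fun S => E.filter (fun x => x ∈ S)) := by
    intro x hx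
    have hx' : x ∈ ⋃₀ dynPartition F P (τ - 1) := by
      rw [dynPartition_cover F hcover]; trivial
    obtain ⟨S, hS, hxS⟩ := hx'
    exact Finset.mem_biUnion.mpr ⟨S, by simpa [hD] using hS,
      Finset.mem_filter.mpr ⟨hx, hxS⟩⟩
  calc E.card ≤ (D.biUnion (fun S => E.filter (fun x => x ∈ S))).card :=
        Finset.card_le_card hsub
    _ ≤ ∑ S ∈ D, (E.filter (fun x => x ∈ S)).card := Finset.card_biUnion_le
    _ ≤ D.card • M := by
        apply Finset.sum_le_card_nsmul
        intro S hS
        apply hM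
        intro x hx y hy hxy
        have hxE := (Finset.mem_filter.mp hx).1
        have hyE := (Finset.mem_filter.mp hy).1
        obtain ⟨s, hsτ, hd⟩ := hE x (by exact_mod_cast hxE) y (by exact_mod_cast hyE) hxy
        refine hd.trans ?_
        exact dynPartition_contr ha0 ha1 hcontr
          (by simpa [hD] using hS) (Finset.mem_filter.mp hx).2
          (Finset.mem_filter.mp hy).2 s (by omega)
    _ = (dynPartition F P (τ - 1)).ncard * M := by
        rw [smul_eq_mul,
          Set.ncard_eq_toFinset_card _ (dynPartition_finite F hPfin (τ - 1))]

/-- for a piecewise contraction `F` of a compact metric space with finite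
base partition `P` and complexity `C(t) = #P^t`, the topological entropy satisfies
`h_top ≤ limsup_t (log C(t))/t`. -/
theorem stmt_6 {X : Type*} [MetricSpace X] [CompactSpace X]
    (F : X → X) (a : ℝ) (ha0 : 0 ≤ a) (ha1 : a < 1)
    (P : Set (Set X)) (hPfin : P.Finite)
    (hcover : ⋃₀ P = Set.univ)
    (hdisj : P.Pairwise Disjoint)
    (hcontr : ∀ A ∈ P, ∀ x ∈ A, ∀ y ∈ A, dist (F x) (F y) ≤ a * dist x y) :
    htop F ≤ Filter.limsup
      (fun t : ℕ =>
        ((Real.log ((dynPartition F P (t - 1)).ncard) / t : ℝ) : EReal)) atTop := by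
  rw [htop]
  apply iSup₂_le
  intro ε hε
  obtain ⟨M, hM1, hM⟩ := exists_sep_bound (X := X) hε
  set g : ℕ → ℝ := fun t => Real.log ((dynPartition F P (t - 1)).ncard) / t with hg
  set h : ℕ → ℝ := fun t => Real.log M / t with hh
  -- pointwise inequality
  have key : ∀ τ : ℕ, Real.log (sepNum F τ ε) / τ ≤ g τ + h τ := by
    intro τ
    have hlog : Real.log (sepNum F τ ε)
        ≤ Real.log ((dynPartition F P (τ - 1)).ncard) + Real.log M := by
      rcases Nat.eq_zero_or_pos (sepNum F τ ε) with h0 | hpos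
      · rw [h0]
        simp only [Nat.cast_zero, Real.log_zero]
        have h1 : (0 : ℝ) ≤ Real.log ((dynPartition F P (τ - 1)).ncard) := by
          rcases Nat.eq_zero_or_pos (dynPartition F P (τ - 1)).ncard with hc | hc
          · simp [hc]
          · exact Real.log_nonneg (by exact_mod_cast hc)
        have h2 : (0 : ℝ) ≤ Real.log M :=
          Real.log_nonneg (by exact_mod_cast hM1)
        linarith
      · have hle := sepNum_le_bound ha0 ha1 hPfin hcover hcontr hM (ε := ε) τ
        have hC : 1 ≤ (dynPartition F P (τ - 1)).ncard := by
          by_contra hc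
          push_neg at hc
          interval_cases hc' : (dynPartition F P (τ - 1)).ncard <;> omega
        calc Real.log (sepNum F τ ε)
            ≤ Real.log (((dynPartition F P (τ - 1)).ncard * M : ℕ) : ℝ) := by
              apply Real.log_le_log (by exact_mod_cast hpos)
              exact_mod_cast hle
          _ = Real.log ((dynPartition F P (τ - 1)).ncard) + Real.log M := by
              rw [Nat.cast_mul]
              exact Real.log_mul (by positivity) (by positivity)
    rcases Nat.eq_zero_or_pos τ with rfl | hτ
    · simp [hg, hh]
    · rw [hg, hh]
      simp only
      rw [← add_div]
      apply div_le_div_of_nonneg_right hlog (by positivity)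
  -- pass to limsup over EReal
  have h1 : limsup (fun τ : ℕ => ((Real.log (sepNum F τ ε) / τ : ℝ) : EReal)) atTop
      ≤ limsup (fun τ : ℕ => ((g τ + h τ : ℝ) : EReal)) atTop := by
    exact limsup_le_limsup
      (Eventually.of_forall fun τ => EReal.coe_le_coe_iff.mpr (key τ))
      isCobounded_le_of_bot isBounded_le_of_top
  have hhlim : limsup (fun τ : ℕ => ((h τ : ℝ) : EReal)) atTop = (0 : EReal) := by
    have : Tendsto (fun τ : ℕ => ((h τ : ℝ) : EReal)) atTop (nhds ((0 : ℝ) : EReal)) :=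
      EReal.tendsto_coe.mpr (tendsto_const_div_atTop_nhds_zero_nat _)
    rw [show ((0:ℝ) : EReal) = (0 : EReal) from rfl] at this
    exact this.limsup_eq
  have heq : (fun τ : ℕ => ((g τ + h τ : ℝ) : EReal))
      = (fun τ : ℕ => ((g τ : ℝ) : EReal)) + (fun τ : ℕ => ((h τ : ℝ) : EReal)) := by
    funext τ
    simp [EReal.coe_add]
  have h2 : limsup (fun τ : ℕ => ((g τ + h τ : ℝ) : EReal)) atTop
      ≤ limsup (fun τ : ℕ => ((g τ : ℝ) : EReal)) atTop := by
    rw [heq]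
    have := EReal.limsup_add_le
      (u := fun τ : ℕ => ((g τ : ℝ) : EReal)) (v := fun τ : ℕ => ((h τ : ℝ) : EReal))
      (f := atTop) (.inr (by rw [hhlim]; simp))
      (.inr (by rw [hhlim]; simp))
    rw [hhlim, add_zero] at this
    exact this
  exact h1.trans (h2.trans (le_of_eq rfl))
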